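/- arXiv:1311.4809 — 4 statements merged into one kernel-verified Lean document; each statement's English description precedes it below -/
import Mathlib

section
/- For every real λ > 0 and every positive integer K, the limit as n → ∞ of the sum Σ_{ℓ=0}^{n−2} min(1, K/(ℓ+1)) · C(n−2, ℓ) · (λ/n)^ℓ · (1 − λ/n)^{n−ℓ−2} exists and equals h(λ) = (K/λ)·(1 − e^{−λ}·Σ_{k=0}^{K} λ^k/k!) + e^{−λ}·Σ_{m=0}^{K−1} λ^m/m!. -/
open Filter Finset

/-- `h(λ) = (K/λ)·(1 − e^{−λ}·Σ_{k=0}^{K} λ^k/k!) + e^{−λ}·Σ_{m=0}^{K−1} λ^m/m!`. -/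
noncomputable def hFun (K : ℕ) (lam : ℝ) : ℝ :=
  ((K : ℝ) / lam) *
      (1 - Real.exp (-lam) * ∑ k ∈ Finset.range (K + 1), lam ^ k / (Nat.factorial k)) +
    Real.exp (-lam) * ∑ m ∈ Finset.range K, lam ^ m / (Nat.factorial m)

private lemma exp_eq_tsum_real (x : ℝ) :
    Real.exp x = ∑' n : ℕ, x ^ n / (Nat.factorial n) := by
  rw [Real.exp_eq_exp_ℝ, NormedSpace.exp_eq_tsum_div]

/-- cast of the binomial coefficient as a product, for `l + 2 ≤ n`. -/
private lemma choose_cast_eq (n l : ℕ) (h : l + 2 ≤ n) :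
    ((n - 2).choose l : ℝ) * (Nat.factorial l : ℝ) =
      ∏ i ∈ range l, ((n : ℝ) - 2 - i) := by
  have h1 : (n - 2).descFactorial l = ∏ i ∈ range l, (n - 2 - i) :=
    Nat.descFactorial_eq_prod_range _ _
  have h2 : (Nat.factorial l) * (n - 2).choose l = (n - 2).descFactorial l :=
    (Nat.descFactorial_eq_factorial_mul_choose _ _).symm
  have : ((n - 2).choose l : ℝ) * (Nat.factorial l : ℝ) =
      ((∏ i ∈ range l, (n - 2 - i) : ℕ) : ℝ) := by
    rw [← h1, ← h2]; push_cast; ring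
  rw [this, Nat.cast_prod]
  refine Finset.prod_congr rfl fun i hi => ?_
  have hi' : i < l := mem_range.mp hi
  have h2n : 2 ≤ n := le_trans (by omega) h
  have hin : i ≤ n - 2 := by omega
  rw [Nat.cast_sub hin, Nat.cast_sub h2n]
  push_cast
  ring

/-- pointwise (termwise) limit. -/
private lemma termwise (lam : ℝ) (hlam : 0 < lam) (l : ℕ) :
    Tendsto (fun n : ℕ => ((n - 2).choose l : ℝ) * (lam / n) ^ l *
        (1 - lam / n) ^ (n - l - 2)) atTop
      (nhds (lam ^ l / (Nat.factorial l) * Real.exp (-lam))) := by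
  -- auxiliary limits
  have hprod : Tendsto (fun n : ℕ => ∏ i ∈ range l, (((n : ℝ) - 2 - i) / n)) atTop
      (nhds 1) := by
    have : Tendsto (fun n : ℕ => ∏ i ∈ range l, (1 - ((2 : ℝ) + i) / n)) atTop
        (nhds (∏ _i ∈ range l, (1 : ℝ))) := by
      refine tendsto_finset_prod _ fun i _ => ?_
      have := tendsto_const_div_atTop_nhds_zero_nat ((2 : ℝ) + i)
      simpa using (tendsto_const_nhds (x := (1:ℝ))).sub this
    rw [Finset.prod_const_one] at this
    refine this.congr' ?_
    filter_upwards [eventually_ge_atTop 1] with n hn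
    refine Finset.prod_congr rfl fun i _ => ?_
    have hn0 : (n : ℝ) ≠ 0 := Nat.cast_ne_zero.mpr (by omega)
    field_simp
    ring
  have hbase : Tendsto (fun n : ℕ => (1 - lam / n) ^ n) atTop (nhds (Real.exp (-lam))) := by
    simpa [sub_eq_add_neg, neg_div] using Real.tendsto_one_add_div_pow_exp (-lam)
  have hden : Tendsto (fun n : ℕ => (1 - lam / n) ^ (l + 2)) atTop (nhds 1) := by
    have h0 : Tendsto (fun n : ℕ => 1 - lam / n) atTop (nhds 1) := by
      simpa using (tendsto_const_nhds (x := (1:ℝ))).sub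
        (tendsto_const_div_atTop_nhds_zero_nat lam)
    simpa using h0.pow (l + 2)
  have hq : Tendsto (fun n : ℕ => (1 - lam / n) ^ n / (1 - lam / n) ^ (l + 2)) atTop
      (nhds (Real.exp (-lam))) := by
    have := hbase.div hden one_ne_zero
    rw [div_one] at this
    exact this
  have hT : Tendsto (fun n : ℕ =>
      (lam ^ l / (Nat.factorial l)) * (∏ i ∈ range l, (((n : ℝ) - 2 - i) / n)) *
        ((1 - lam / n) ^ n / (1 - lam / n) ^ (l + 2))) atTop
      (nhds (lam ^ l / (Nat.factorial l) * Real.exp (-lam))) := by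
    have := ((tendsto_const_nhds (x := lam ^ l / (Nat.factorial l : ℝ))).mul hprod).mul hq
    simpa using this
  refine hT.congr' ?_
  filter_upwards [eventually_ge_atTop (l + 2),
    tendsto_natCast_atTop_atTop.eventually_gt_atTop lam] with n hn hlamn
  have hn0 : (0 : ℝ) < n := lt_trans hlam hlamn
  have hne : (n : ℝ) ≠ 0 := ne_of_gt hn0
  have hfac : (Nat.factorial l : ℝ) ≠ 0 := Nat.cast_ne_zero.mpr (Nat.factorial_ne_zero l)
  have hb : (1 : ℝ) - lam / n ≠ 0 := by
    have : lam / n < 1 := (div_lt_one hn0).mpr hlamn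
    linarith
  -- choose part
  have hc : ((n - 2).choose l : ℝ) * (lam / n) ^ l =
      lam ^ l / (Nat.factorial l) * ∏ i ∈ range l, (((n : ℝ) - 2 - i) / n) := by
    have h1 := choose_cast_eq n l hn
    rw [Finset.prod_div_distrib, Finset.prod_const, Finset.card_range, div_pow]
    rw [div_mul_div_comm]
    rw [← h1]
    field_simp
  -- exponent part
  have he : (1 - lam / n) ^ (n - l - 2) =
      (1 - lam / n) ^ n / (1 - lam / n) ^ (l + 2) := by
    have : n - l - 2 = n - (l + 2) := by omega
    rw [this, pow_sub₀ _ hb hn]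
    exact (div_eq_mul_inv _ _).symm
  rw [hc, he]

/-- The limit as `n → ∞` of
`Σ_{ℓ=0}^{n−2} min(1, K/(ℓ+1)) · C(n−2, ℓ) · (λ/n)^ℓ · (1 − λ/n)^{n−ℓ−2}`
exists and equals `h(λ)`. -/
theorem stmt0 (lam : ℝ) (hlam : 0 < lam) (K : ℕ) (hK : 0 < K) :
    Tendsto
      (fun n : ℕ =>
        ∑ l ∈ Finset.range (n - 1),
          min 1 ((K : ℝ) / (l + 1)) * ((n - 2).choose l : ℝ) * (lam / n) ^ l *
            (1 - lam / n) ^ (n - l - 2))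
      atTop (nhds (hFun K lam)) := by
  set F : ℕ → ℕ → ℝ := fun n l =>
    min 1 ((K : ℝ) / (l + 1)) * ((n - 2).choose l : ℝ) * (lam / n) ^ l *
      (1 - lam / n) ^ (n - l - 2) with hF
  set g : ℕ → ℝ := fun l =>
    min 1 ((K : ℝ) / (l + 1)) * (lam ^ l / (Nat.factorial l) * Real.exp (-lam)) with hg
  have hminmem : ∀ l : ℕ, 0 ≤ min 1 ((K : ℝ) / (l + 1)) ∧ min 1 ((K : ℝ) / (l + 1)) ≤ 1 :=
    fun l => ⟨le_min zero_le_one (by positivity), min_le_left _ _⟩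
  -- Tannery
  have hTan : Tendsto (fun n : ℕ => ∑' l : ℕ, F n l) atTop (nhds (∑' l : ℕ, g l)) := by
    refine tendsto_tsum_of_dominated_convergence
      (Real.summable_pow_div_factorial lam) (fun l => ?_) ?_
    · have := (termwise lam hlam l).const_mul (min 1 ((K : ℝ) / (l + 1)))
      simp only [hF, hg]
      refine this.congr fun n => by ring
    · filter_upwards [eventually_ge_atTop 1,
        tendsto_natCast_atTop_atTop.eventually_ge_atTop lam] with n hn1 hlamn l
      have hn0 : (0 : ℝ) < n := by
        have : (1 : ℝ) ≤ n := by exact_mod_cast hn1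
        linarith
      have hb0 : 0 ≤ 1 - lam / n := by
        have : lam / n ≤ 1 := (div_le_one hn0).mpr hlamn
        linarith
      have hb1 : 1 - lam / n ≤ 1 := by
        have : 0 ≤ lam / n := div_nonneg hlam.le hn0.le
        linarith
      have hcle : ((n - 2).choose l : ℝ) * (lam / n) ^ l ≤ lam ^ l / Nat.factorial l := by
        have hd : ((n - 2).choose l : ℝ) * (Nat.factorial l) ≤ (n : ℝ) ^ l := by
          have h1 : Nat.factorial l * (n - 2).choose l ≤ n ^ l :=
            le_trans (Nat.descFactorial_eq_factorial_mul_choose _ _ ▸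
              Nat.descFactorial_le_pow _ _) (Nat.pow_le_pow_left (Nat.sub_le n 2) l)
          calc ((n - 2).choose l : ℝ) * (Nat.factorial l)
              = ((Nat.factorial l * (n - 2).choose l : ℕ) : ℝ) := by push_cast; ring
            _ ≤ ((n ^ l : ℕ) : ℝ) := by exact_mod_cast h1
            _ = (n : ℝ) ^ l := by push_cast; ring
        rw [div_pow, ← mul_div_assoc]
        rw [div_le_div_iff₀ (by positivity) (by positivity)]
        calc ((n - 2).choose l : ℝ) * lam ^ l * (Nat.factorial l)
            = (((n - 2).choose l : ℝ) * (Nat.factorial l)) * lam ^ l := by ring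
          _ ≤ (n : ℝ) ^ l * lam ^ l := by
              exact mul_le_mul_of_nonneg_right hd (by positivity)
          _ = lam ^ l * (n : ℝ) ^ l := by ring
      have hFnn : 0 ≤ F n l := by
        have := (hminmem l).1
        have h1 : (0:ℝ) ≤ ((n - 2).choose l : ℝ) := Nat.cast_nonneg _
        have h2 : (0:ℝ) ≤ (lam / n) ^ l := by positivity
        have h3 : (0:ℝ) ≤ (1 - lam / n) ^ (n - l - 2) := pow_nonneg hb0 _
        simp only [hF]
        positivity
      rw [Real.norm_eq_abs, abs_of_nonneg hFnn]
      calc F n l = min 1 ((K : ℝ) / (l + 1)) *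
            (((n - 2).choose l : ℝ) * (lam / n) ^ l) * (1 - lam / n) ^ (n - l - 2) := by
            simp only [hF]; ring
        _ ≤ 1 * (lam ^ l / Nat.factorial l) * 1 := by
            refine mul_le_mul (mul_le_mul (hminmem l).2 hcle (by positivity)
              zero_le_one) (pow_le_one₀ hb0 hb1) (pow_nonneg hb0 _) (by positivity)
        _ = lam ^ l / Nat.factorial l := by ring
  -- replace tsum by finite sums eventually
  have hfin : Tendsto (fun n : ℕ => ∑ l ∈ range (n - 1), F n l) atTop
      (nhds (∑' l : ℕ, g l)) := by
    refine hTan.congr' ?_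
    filter_upwards [eventually_ge_atTop 2] with n hn
    refine tsum_eq_sum fun l hl => ?_
    have hl' : n - 2 < l := by
      have := mem_range.not.mp hl
      omega
    simp [hF, Nat.choose_eq_zero_of_lt hl']
  -- compute the tsum
  have hgsum : Summable g := by
    refine Summable.of_nonneg_of_le (fun l => ?_) (fun l => ?_)
      ((Real.summable_pow_div_factorial lam).mul_right (Real.exp (-lam)))
    · have := (hminmem l).1
      have : 0 ≤ lam ^ l / (Nat.factorial l : ℝ) * Real.exp (-lam) := by positivity
      simp only [hg]
      positivity
    · simp only [hg]
      have h2 : (0:ℝ) ≤ lam ^ l / (Nat.factorial l : ℝ) * Real.exp (-lam) := by positivity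
      calc min 1 ((K : ℝ) / (l + 1)) * (lam ^ l / (Nat.factorial l) * Real.exp (-lam))
          ≤ 1 * (lam ^ l / (Nat.factorial l) * Real.exp (-lam)) :=
            mul_le_mul_of_nonneg_right (hminmem l).2 h2
        _ = lam ^ l / (Nat.factorial l) * Real.exp (-lam) := one_mul _
  have hsplit : ∑' l : ℕ, g l = ∑ l ∈ range K, g l + ∑' l : ℕ, g (l + K) :=
    (Summable.sum_add_tsum_nat_add K hgsum).symm
  have hhead : ∑ l ∈ range K, g l =
      Real.exp (-lam) * ∑ m ∈ range K, lam ^ m / (Nat.factorial m) := by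
    rw [Finset.mul_sum]
    refine Finset.sum_congr rfl fun l hl => ?_
    have hlK : l + 1 ≤ K := mem_range.mp hl
    have hmin : min 1 ((K : ℝ) / (l + 1)) = 1 := by
      rw [min_eq_left]
      rw [le_div_iff₀ (by positivity)]
      rw [one_mul]
      exact_mod_cast hlK
    simp only [hg, hmin]
    ring
  have htail : ∑' l : ℕ, g (l + K) =
      ((K : ℝ) / lam) *
        (1 - Real.exp (-lam) * ∑ k ∈ range (K + 1), lam ^ k / (Nat.factorial k)) := by
    have hterm : ∀ l : ℕ, g (l + K) =
        ((K : ℝ) / lam * Real.exp (-lam)) *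
          (lam ^ (l + (K + 1)) / (Nat.factorial (l + (K + 1)))) := by
      intro l
      have hmin : min 1 ((K : ℝ) / (l + K + 1)) = (K : ℝ) / (l + K + 1) := by
        rw [min_eq_right]
        rw [div_le_one (by positivity)]
        have : (K : ℝ) ≤ (l : ℝ) + K + 1 := by
          have : (0:ℝ) ≤ (l : ℝ) := Nat.cast_nonneg l
          linarith
        exact this
      have hfac : (Nat.factorial (l + K + 1) : ℝ) =
          ((l : ℝ) + K + 1) * (Nat.factorial (l + K)) := by
        have : Nat.factorial (l + K + 1) = (l + K + 1) * Nat.factorial (l + K) :=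
          Nat.factorial_succ _
        rw [this]; push_cast; ring
      simp only [hg]
      push_cast
      rw [hmin]
      have h1 : (l : ℕ) + (K + 1) = (l + K) + 1 := by omega
      rw [h1]
      rw [pow_succ]
      rw [show (Nat.factorial (l + K + 1) : ℝ) = ((l : ℝ) + K + 1) * (Nat.factorial (l + K))
        from hfac]
      have hfk : (Nat.factorial (l + K) : ℝ) ≠ 0 :=
        Nat.cast_ne_zero.mpr (Nat.factorial_ne_zero _)
      have hlk1 : ((l : ℝ) + K + 1) ≠ 0 := by positivity
      push_cast
      field_simp
    rw [tsum_congr hterm]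
    rw [tsum_mul_left]
    have hts : ∑' l : ℕ, lam ^ (l + (K + 1)) / (Nat.factorial (l + (K + 1)) : ℝ) =
        Real.exp lam - ∑ k ∈ range (K + 1), lam ^ k / (Nat.factorial k) := by
      have := Summable.sum_add_tsum_nat_add (f := fun m : ℕ => lam ^ m / (Nat.factorial m : ℝ))
        (K + 1) (Real.summable_pow_div_factorial lam)
      rw [← exp_eq_tsum_real] at this
      linarith
    rw [hts]
    have hee : Real.exp (-lam) * Real.exp lam = 1 := by
      rw [← Real.exp_add]; simp
    have hlam' : lam ≠ 0 := ne_of_gt hlam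
    calc ((K : ℝ) / lam * Real.exp (-lam)) *
          (Real.exp lam - ∑ k ∈ range (K + 1), lam ^ k / (Nat.factorial k))
        = ((K : ℝ) / lam) * (Real.exp (-lam) * Real.exp lam -
            Real.exp (-lam) * ∑ k ∈ range (K + 1), lam ^ k / (Nat.factorial k)) := by ring
      _ = ((K : ℝ) / lam) *
            (1 - Real.exp (-lam) * ∑ k ∈ range (K + 1), lam ^ k / (Nat.factorial k)) := by
          rw [hee]
  have : ∑' l : ℕ, g l = hFun K lam := by
    rw [hsplit, hhead, htail, hFun]
    ring
  rw [← this]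
  exact hfin
end

section
/- For every real λ > 0 and every positive integer K, the limit as n → ∞ of the sum Σ_{ℓ=K}^{n−2} (K/(ℓ+1)) · C(n−2, ℓ) · (λ/n)^ℓ · (1 − λ/n)^{n−ℓ−2} exists and equals (K/λ)·(1 − e^{−λ}·Σ_{k=0}^{K} λ^k/k!). -/
open Filter Finset

lemma aux_choose (lam : ℝ) (l : ℕ) :
    Tendsto (fun n : ℕ => ((n - 2).choose l : ℝ) * (lam / n) ^ l) atTop
      (nhds (lam ^ l / l.factorial)) := by
  have hprod : Tendsto (fun n : ℕ => ∏ i ∈ range l, (((n : ℝ) - 2 - i) / n)) atTop (nhds 1) := by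
    have h1 : Tendsto (fun n : ℕ => ∏ i ∈ range l, (1 - (2 + (i : ℝ)) / n)) atTop
        (nhds (∏ i ∈ range l, (1 : ℝ))) := by
      apply tendsto_finset_prod
      intro i _
      have := (tendsto_const_div_atTop_nhds_zero_nat (2 + (i : ℝ)))
      have h := (tendsto_const_nhds : Tendsto (fun _ : ℕ => (1:ℝ)) atTop (nhds 1)).sub this
      simpa using h
    rw [prod_const_one] at h1
    apply h1.congr'
    filter_upwards [eventually_ge_atTop 1] with n hn
    apply prod_congr rfl
    intro i _
    have hn0 : (n : ℝ) ≠ 0 := by positivity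
    field_simp
    ring
  have hmain : Tendsto (fun n : ℕ => (∏ i ∈ range l, (((n : ℝ) - 2 - i) / n)) *
      (lam ^ l / l.factorial)) atTop (nhds (lam ^ l / l.factorial)) := by
    simpa using hprod.mul_const (lam ^ l / (l.factorial : ℝ))
  apply hmain.congr'
  filter_upwards [eventually_ge_atTop (l + 2)] with n hn
  have hn0 : (n : ℝ) ≠ 0 := Nat.cast_ne_zero.mpr (by omega)
  have hdesc : (((n - 2).descFactorial l : ℕ) : ℝ) = ∏ i ∈ range l, ((n : ℝ) - 2 - i) := by
    rw [Nat.descFactorial_eq_prod_range]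
    push_cast [Nat.cast_prod]
    apply prod_congr rfl
    intro i hi
    have hi' : i < l := mem_range.mp hi
    have h2 : 2 ≤ n := by omega
    have h3 : i ≤ n - 2 := by omega
    rw [Nat.cast_sub h3, Nat.cast_sub h2]
    push_cast
    ring
  have hchoose : (((n - 2).choose l : ℕ) : ℝ) =
      (∏ i ∈ range l, ((n : ℝ) - 2 - i)) / l.factorial := by
    have := Nat.descFactorial_eq_factorial_mul_choose (n - 2) l
    have hcast : (((n - 2).descFactorial l : ℕ) : ℝ) =
        (l.factorial : ℝ) * ((n - 2).choose l : ℕ) := by exact_mod_cast congrArg (Nat.cast (R := ℝ)) this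
    rw [hdesc] at hcast
    field_simp at hcast ⊢
    linarith [hcast]
  rw [prod_div_distrib, prod_const, card_range]
  rw [hchoose, div_pow]
  ring


lemma aux_pow (lam : ℝ) (hlam : 0 < lam) (l : ℕ) :
    Tendsto (fun n : ℕ => (1 - lam / n) ^ (n - l - 2)) atTop (nhds (Real.exp (-lam))) := by
  have h1 : Tendsto (fun n : ℕ => (1 - lam / n) ^ n) atTop (nhds (Real.exp (-lam))) := by
    have := Real.tendsto_one_add_div_pow_exp (-lam)
    apply this.congr
    intro n
    ring_nf
  have hbase : Tendsto (fun n : ℕ => (1 - lam / n)) atTop (nhds 1) := by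
    have := tendsto_const_div_atTop_nhds_zero_nat lam
    have h := (tendsto_const_nhds : Tendsto (fun _ : ℕ => (1:ℝ)) atTop (nhds 1)).sub this
    simpa using h
  have h2 : Tendsto (fun n : ℕ => (1 - lam / n) ^ (l + 2)) atTop (nhds 1) := by
    have := hbase.pow (l + 2)
    simpa using this
  have h3 := h1.div h2 one_ne_zero
  rw [div_one] at h3
  apply h3.congr'
  filter_upwards [eventually_ge_atTop (l + 2), eventually_gt_atTop ⌈lam⌉₊] with n hn hn2
  have hlt : lam < n := lt_of_le_of_lt (Nat.le_ceil lam) (by exact_mod_cast hn2)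
  have hn0 : (0:ℝ) < n := lt_trans hlam hlt
  have hne : (1 : ℝ) - lam / n ≠ 0 := by
    have : lam / n < 1 := (div_lt_one hn0).mpr hlt
    linarith
  simp only [Pi.div_apply]
  rw [eq_comm, show n - l - 2 = n - (l + 2) by omega, pow_sub₀ _ hne hn, div_eq_mul_inv]
  ring


noncomputable def Fterm (lam : ℝ) (K n l : ℕ) : ℝ :=
  if K ≤ l ∧ l ≤ n - 2 then
    ((K : ℝ) / (l + 1)) * ((n - 2).choose l : ℝ) * (lam / n) ^ l * (1 - lam / n) ^ (n - l - 2)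
  else 0

noncomputable def Gterm (lam : ℝ) (K l : ℕ) : ℝ :=
  if K ≤ l then ((K : ℝ) / (l + 1)) * (lam ^ l / l.factorial) * Real.exp (-lam) else 0

lemma hbound_aux (lam : ℝ) (hlam : 0 < lam) (K : ℕ) :
    ∀ᶠ n : ℕ in atTop, ∀ l : ℕ, ‖Fterm lam K n l‖ ≤ (K : ℝ) * (lam ^ l / l.factorial) := by
  filter_upwards [eventually_gt_atTop ⌈lam⌉₊] with n hn2 l
  have hlt : lam < n := lt_of_le_of_lt (Nat.le_ceil lam) (by exact_mod_cast hn2)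
  have hn0 : (0:ℝ) < n := lt_trans hlam hlt
  unfold Fterm
  split_ifs with h
  · have hb : (0:ℝ) ≤ 1 - lam / n := by
      have : lam / n ≤ 1 := (div_le_one hn0).mpr hlt.le
      linarith
    have hln : (0:ℝ) ≤ lam / n := div_nonneg hlam.le hn0.le
    have hcse : (0:ℝ) ≤ ((n - 2).choose l : ℝ) := Nat.cast_nonneg _
    have hKl : (0:ℝ) ≤ (K : ℝ) / (l + 1) := by positivity
    have hnonneg : (0:ℝ) ≤ ((K : ℝ) / (l + 1)) * ((n - 2).choose l : ℝ) * (lam / n) ^ l *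
        (1 - lam / n) ^ (n - l - 2) := by
      apply mul_nonneg (mul_nonneg (mul_nonneg hKl hcse) (pow_nonneg hln l)) (pow_nonneg hb _)
    rw [Real.norm_eq_abs, abs_of_nonneg hnonneg]
    have hnat : ((n - 2).choose l : ℕ) * l.factorial ≤ n ^ l := by
      calc ((n - 2).choose l : ℕ) * l.factorial = l.factorial * ((n-2).choose l) := by ring
      _ = (n - 2).descFactorial l := (Nat.descFactorial_eq_factorial_mul_choose _ _).symm
      _ ≤ (n - 2) ^ l := Nat.descFactorial_le_pow _ _
      _ ≤ n ^ l := Nat.pow_le_pow_left (by omega) l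
    have hc1 : ((n - 2).choose l : ℝ) ≤ (n:ℝ) ^ l / l.factorial := by
      rw [le_div_iff₀ (by positivity : (0:ℝ) < (l.factorial : ℝ))]
      exact_mod_cast hnat
    have hc : ((n - 2).choose l : ℝ) * (lam / n) ^ l ≤ lam ^ l / l.factorial := by
      have h2 := mul_le_mul_of_nonneg_right hc1 (pow_nonneg hln l)
      apply le_trans h2
      rw [div_pow]
      rw [div_mul_div_comm]
      rw [div_le_div_iff₀ (by positivity) (by positivity)]
      ring_nf
      apply le_of_eq
      ring
    have hone : (1 - lam / n) ^ (n - l - 2) ≤ 1 := pow_le_one₀ hb (by linarith [((div_le_one hn0).mpr hlt.le : lam / n ≤ 1)])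
    have hK' : (K : ℝ) / (l + 1) ≤ K := by
      apply div_le_self (Nat.cast_nonneg K)
      have : (0:ℝ) ≤ l := Nat.cast_nonneg l
      linarith
    calc ((K : ℝ) / (l + 1)) * ((n - 2).choose l : ℝ) * (lam / n) ^ l *
        (1 - lam / n) ^ (n - l - 2)
        = (((K : ℝ) / (l + 1)) * (((n - 2).choose l : ℝ) * (lam / n) ^ l)) *
          (1 - lam / n) ^ (n - l - 2) := by ring
      _ ≤ ((K : ℝ) * (lam ^ l / l.factorial)) * 1 := by
          apply mul_le_mul _ hone (pow_nonneg hb _) (by positivity)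
          exact mul_le_mul hK' hc (mul_nonneg hcse (pow_nonneg hln l)) (Nat.cast_nonneg K)
      _ = (K : ℝ) * (lam ^ l / l.factorial) := by ring
  · simp only [norm_zero]
    positivity

lemma hlim_aux (lam : ℝ) (hlam : 0 < lam) (K : ℕ) (l : ℕ) :
    Tendsto (fun n : ℕ => Fterm lam K n l) atTop (nhds (Gterm lam K l)) := by
  by_cases hKl : K ≤ l
  · have h := ((aux_choose lam l).mul (aux_pow lam hlam l)).const_mul ((K : ℝ) / (l + 1))
    have heq : Gterm lam K l = ((K : ℝ) / (l + 1)) *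
        ((lam ^ l / l.factorial) * Real.exp (-lam)) := by
      simp [Gterm, hKl, mul_assoc]
    rw [heq]
    apply h.congr'
    filter_upwards [eventually_ge_atTop (l + 2)] with n hn
    have : l ≤ n - 2 := by omega
    simp only [Fterm, hKl, this, and_self, if_true]
    ring
  · have : (fun n : ℕ => Fterm lam K n l) = fun _ => 0 := by
      funext n; simp [Fterm, hKl]
    rw [this]
    simp [Gterm, hKl]

lemma gsum_aux (lam : ℝ) (hlam : 0 < lam) (K : ℕ) :
    ∑' l, Gterm lam K l = ((K : ℝ) / lam) *
      (1 - Real.exp (-lam) * ∑ k ∈ Finset.range (K + 1), lam ^ k / (Nat.factorial k)) := by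
  have hlam0 : lam ≠ 0 := hlam.ne'
  have hsum : Summable (fun l : ℕ => lam ^ l / (l.factorial : ℝ)) :=
    Real.summable_pow_div_factorial lam
  have hbs : Summable (fun l : ℕ => (K : ℝ) * (lam ^ l / (l.factorial : ℝ)) * Real.exp (-lam)) :=
    (hsum.mul_left ((K : ℝ))).mul_right (Real.exp (-lam))
  have hg : Summable (Gterm lam K) := by
    apply Summable.of_norm_bounded hbs
    intro l
    unfold Gterm
    split_ifs with h
    · rw [Real.norm_eq_abs, abs_of_nonneg (by positivity)]
      have hK' : (K : ℝ) / (l + 1) ≤ K := by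
        apply div_le_self (Nat.cast_nonneg K)
        have : (0:ℝ) ≤ l := Nat.cast_nonneg l
        linarith
      apply mul_le_mul_of_nonneg_right _ (Real.exp_nonneg _)
      exact mul_le_mul_of_nonneg_right hK' (by positivity)
    · simp only [norm_zero]; positivity
  have hexp : ∑' m : ℕ, lam ^ m / (m.factorial : ℝ) = Real.exp lam := by
    rw [Real.exp_eq_exp_ℝ, NormedSpace.exp_eq_tsum_div]
  have hsplit := Summable.sum_add_tsum_nat_add (f := Gterm lam K) K hg
  have hzero : ∑ i ∈ range K, Gterm lam K i = 0 := by
    apply sum_eq_zero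
    intro i hi
    have : ¬ K ≤ i := by simpa using mem_range.mp hi
    simp [Gterm, this]
  have hGshift : ∀ m : ℕ, Gterm lam K (m + K) =
      ((K : ℝ) * Real.exp (-lam) / lam) * (lam ^ (m + (K + 1)) / ((m + (K + 1)).factorial : ℝ)) := by
    intro m
    have h1 : K ≤ m + K := Nat.le_add_left K m
    simp only [Gterm, h1, if_true]
    have h2 : (m + (K + 1)).factorial = (m + K + 1) * (m + K).factorial := by
      rw [show m + (K + 1) = (m + K) + 1 by ring, Nat.factorial_succ]
    rw [h2]
    have hf : ((m + K).factorial : ℝ) ≠ 0 := by positivity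
    have hm1 : ((m + K : ℕ) : ℝ) + 1 ≠ 0 := by positivity
    push_cast
    rw [show m + (K + 1) = (m + K) + 1 by ring]
    rw [pow_succ]
    field_simp
  have hsplit2 := Summable.sum_add_tsum_nat_add (f := fun m : ℕ => lam ^ m / (m.factorial : ℝ)) (K + 1) hsum
  rw [hexp] at hsplit2
  have htail : ∑' m : ℕ, lam ^ (m + (K + 1)) / ((m + (K + 1)).factorial : ℝ)
      = Real.exp lam - ∑ k ∈ range (K + 1), lam ^ k / (k.factorial : ℝ) := by
    linarith [hsplit2]
  calc ∑' l, Gterm lam K l = ∑ i ∈ range K, Gterm lam K i + ∑' m, Gterm lam K (m + K) :=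
        hsplit.symm
    _ = ∑' m, Gterm lam K (m + K) := by rw [hzero, zero_add]
    _ = ((K : ℝ) * Real.exp (-lam) / lam) *
        ∑' m, lam ^ (m + (K + 1)) / ((m + (K + 1)).factorial : ℝ) := by
        rw [← tsum_mul_left]
        exact tsum_congr hGshift
    _ = ((K : ℝ) * Real.exp (-lam) / lam) *
        (Real.exp lam - ∑ k ∈ range (K + 1), lam ^ k / (k.factorial : ℝ)) := by rw [htail]
    _ = ((K : ℝ) / lam) *
        (1 - Real.exp (-lam) * ∑ k ∈ Finset.range (K + 1), lam ^ k / (Nat.factorial k)) := by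
        have h1 : Real.exp (-lam) * Real.exp lam = 1 := by
          rw [← Real.exp_add]; simp
        field_simp
        linear_combination ((K : ℝ)) * h1


/-- The limit as `n → ∞` of the tail sum
`Σ_{ℓ=K}^{n−2} (K/(ℓ+1)) · C(n−2, ℓ) · (λ/n)^ℓ · (1 − λ/n)^{n−ℓ−2}`
exists and equals `(K/λ)·(1 − e^{−λ}·Σ_{k=0}^{K} λ^k/k!)`. -/
theorem stmt2 (lam : ℝ) (hlam : 0 < lam) (K : ℕ) (hK : 0 < K) :
    Tendsto
      (fun n : ℕ =>
        ∑ l ∈ Finset.Icc K (n - 2),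
          ((K : ℝ) / (l + 1)) * ((n - 2).choose l : ℝ) * (lam / n) ^ l *
            (1 - lam / n) ^ (n - l - 2))
      atTop
      (nhds (((K : ℝ) / lam) *
        (1 - Real.exp (-lam) * ∑ k ∈ Finset.range (K + 1), lam ^ k / (Nat.factorial k)))) := by
  have hsumb : Summable (fun l : ℕ => (K : ℝ) * (lam ^ l / (l.factorial : ℝ))) :=
    (Real.summable_pow_div_factorial lam).mul_left _
  have H := tendsto_tsum_of_dominated_convergence hsumb (hlim_aux lam hlam K)
    (hbound_aux lam hlam K)
  rw [← gsum_aux lam hlam K]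
  apply H.congr
  intro n
  rw [tsum_eq_sum (s := Finset.Icc K (n - 2)) ?_]
  · apply sum_congr rfl
    intro l hl
    rw [mem_Icc] at hl
    simp [Fterm, hl.1, hl.2]
  · intro l hl
    rw [mem_Icc] at hl
    simp only [Fterm]
    exact if_neg hl
end

section
/- For every real λ > 0 and every positive integer K, Σ_{ℓ=0}^{∞} min(1, K/(ℓ+1)) · e^{−λ}·λ^ℓ/ℓ! = h(λ), where h(λ) = (K/λ)·(1 − e^{−λ}·Σ_{k=0}^{K} λ^k/k!) + e^{−λ}·Σ_{m=0}^{K−1} λ^m/m!. -/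
open Finset

/-- `Σ_{ℓ=0}^{∞} min(1, K/(ℓ+1)) · e^{−λ}·λ^ℓ/ℓ! = h(λ)`:  `h(λ)` is the
expectation of `min(1, K/(L+1))` for `L` Poisson with mean `λ`. -/
theorem stmt4 (lam : ℝ) (hlam : 0 < lam) (K : ℕ) (hK : 0 < K) :
    HasSum
      (fun l : ℕ =>
        min 1 ((K : ℝ) / (l + 1)) * (Real.exp (-lam) * lam ^ l / (Nat.factorial l)))
      (hFun K lam) := by
  set f : ℕ → ℝ := fun l =>
    min 1 ((K : ℝ) / (l + 1)) * (Real.exp (-lam) * lam ^ l / (Nat.factorial l)) with hf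
  have hexp : HasSum (fun n : ℕ => lam ^ n / (Nat.factorial n)) (Real.exp lam) := by
    rw [Real.exp_eq_exp_ℝ]
    exact NormedSpace.expSeries_div_hasSum_exp lam
  have htail : HasSum (fun n : ℕ => lam ^ (n + (K + 1)) / (Nat.factorial (n + (K + 1))))
      (Real.exp lam - ∑ j ∈ Finset.range (K + 1), lam ^ j / (Nat.factorial j)) :=
    (hasSum_nat_add_iff' (K + 1)).mpr hexp
  have hmul := htail.mul_left (((K : ℝ) / lam) * Real.exp (-lam))
  have heq : (fun n : ℕ => ((K : ℝ) / lam) * Real.exp (-lam) *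
      (lam ^ (n + (K + 1)) / (Nat.factorial (n + (K + 1))))) = fun n : ℕ => f (n + K) := by
    funext n
    have h1 : (K : ℝ) / ((n : ℝ) + K + 1) ≤ 1 := by
      rw [div_le_one (by positivity)]
      push_cast; linarith [Nat.cast_nonneg (α := ℝ) n]
    simp only [hf, Nat.cast_add, min_eq_right h1]
    have hfac : (Nat.factorial (n + (K + 1)) : ℝ)
        = ((n : ℝ) + K + 1) * Nat.factorial (n + K) := by
      have : n + (K + 1) = (n + K) + 1 := by ring
      rw [this, Nat.factorial_succ]; push_cast; ring
    have hpow : lam ^ (n + (K + 1)) = lam * lam ^ (n + K) := by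
      rw [show n + (K + 1) = (n + K) + 1 from by ring, pow_succ]; ring
    rw [hfac, hpow]
    have hd : ((n : ℝ) + K + 1) ≠ 0 := by positivity
    have hfn : (Nat.factorial (n + K) : ℝ) ≠ 0 := by positivity
    field_simp
  rw [heq] at hmul
  refine (hasSum_nat_add_iff' (f := f) K).mp ?_
  convert hmul using 1
  case e'_3 => rfl
  have hmin : ∀ i ∈ Finset.range K, f i = Real.exp (-lam) * lam ^ i / (Nat.factorial i) := by
    intro i hi
    have hi' : i + 1 ≤ K := Finset.mem_range.mp hi
    have h1 : (1 : ℝ) ≤ (K : ℝ) / ((i : ℝ) + 1) := by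
      have h2 : ((i : ℝ) + 1) ≤ K := by exact_mod_cast hi'
      rw [le_div_iff₀ (by positivity)]; linarith
    simp [hf, min_eq_left h1]
  rw [Finset.sum_congr rfl hmin]
  have hE : Real.exp (-lam) * Real.exp lam = 1 := by
    rw [← Real.exp_add]; simp
  unfold hFun
  have : ∑ i ∈ Finset.range K, Real.exp (-lam) * lam ^ i / (Nat.factorial i)
      = Real.exp (-lam) * ∑ m ∈ Finset.range K, lam ^ m / (Nat.factorial m) := by
    rw [Finset.mul_sum]; congr 1; funext m; ring
  rw [this]
  have key : (K : ℝ) / lam * Real.exp (-lam) *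
      (Real.exp lam - ∑ j ∈ Finset.range (K + 1), lam ^ j / (Nat.factorial j))
      = (K : ℝ) / lam *
        (1 - Real.exp (-lam) * ∑ j ∈ Finset.range (K + 1), lam ^ j / (Nat.factorial j)) := by
    rw [mul_assoc, mul_sub, hE]
  rw [key]
  ring
end

section
/- Let α > 2, ρ > 0, ρ_c > 0 and N > 0 be real numbers, and let μ be a probability measure on ℝ such that μ((x, ∞)) = e^{−ρ_c·π·x²} for every x ≥ 0. Then for every τ > 0, the μ-measure of the set of r > 0 satisfying log₂(1 + (N·α·sin(2π/α)/(2π²·ρ·r²))^{α/2}) ≤ τ equals exp(−(ρ_c/ρ)·N·(α/(2π))·sin(2π/α)·(2^τ − 1)^{−2/α}). -/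
open Real MeasureTheory

lemma atom_zero (c : ℝ) (μ : Measure ℝ) [IsProbabilityMeasure μ]
    (hμ : ∀ x : ℝ, 0 ≤ x → μ (Set.Ioi x) = ENNReal.ofReal (Real.exp (-(c * x ^ 2))))
    (x₀ : ℝ) (hx₀ : 0 < x₀) : μ {x₀} = 0 := by
  refine le_antisymm (ENNReal.le_of_forall_pos_le_add fun ε hε _ => ?_) zero_le
  rw [zero_add]
  have hε' : (0 : ℝ) < ε := hε
  have hcont : Continuous fun y : ℝ => Real.exp (-(c * y ^ 2)) := by continuity
  obtain ⟨δ, hδ, hδ'⟩ := Metric.continuous_iff.mp hcont x₀ ε hε'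
  set a : ℝ := x₀ - min (δ / 2) (x₀ / 2) with ha
  have hmin : 0 < min (δ / 2) (x₀ / 2) := lt_min (by linarith) (by linarith)
  have ha0 : 0 ≤ a := by
    have := min_le_right (δ / 2) (x₀ / 2); simp only [ha]; linarith
  have hax : a < x₀ := by simp only [ha]; linarith
  have hdist : dist a x₀ < δ := by
    rw [Real.dist_eq]
    have := min_le_left (δ / 2) (x₀ / 2)
    rw [abs_sub_comm, abs_of_nonneg (by simp only [ha]; linarith)]
    simp only [ha]; linarith
  have hclose := hδ' a hdist
  rw [Real.dist_eq] at hclose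
  have hsub : {x₀} ⊆ Set.Ioc a x₀ := by
    intro y hy; rw [Set.mem_singleton_iff] at hy; subst hy; exact ⟨hax, le_refl _⟩
  refine le_trans (measure_mono hsub) ?_
  have hunion : Set.Ioc a x₀ ∪ Set.Ioi x₀ = Set.Ioi a := Set.Ioc_union_Ioi_eq_Ioi hax.le
  have hdisj : Disjoint (Set.Ioc a x₀) (Set.Ioi x₀) := Set.Ioc_disjoint_Ioi le_rfl
  have hadd : μ (Set.Ioc a x₀) + μ (Set.Ioi x₀) = μ (Set.Ioi a) := by
    rw [← measure_union hdisj measurableSet_Ioi, hunion]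
  have hIoc : μ (Set.Ioc a x₀) = μ (Set.Ioi a) - μ (Set.Ioi x₀) := by
    rw [← hadd]; exact (ENNReal.add_sub_cancel_right (measure_ne_top μ _)).symm
  rw [hIoc, hμ a ha0, hμ x₀ hx₀.le,
    ← ENNReal.ofReal_sub _ (Real.exp_nonneg _)]
  calc ENNReal.ofReal (Real.exp (-(c * a ^ 2)) - Real.exp (-(c * x₀ ^ 2)))
      ≤ ENNReal.ofReal ε := by
        refine ENNReal.ofReal_le_ofReal ?_
        have := abs_le.mp hclose.le
        linarith [this.2]
    _ = (ε : ENNReal) := ENNReal.ofReal_coe_nnreal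

/-- CDF of the spectral efficiency (Equation (14)):  if `μ` is the law of the
link length, with survival function `μ((x,∞)) = e^{−ρ_c·π·x²}` for `x ≥ 0`,
then for every `τ > 0` the `μ`-measure of the set of `r > 0` with
`log₂(1 + (N·α·sin(2π/α)/(2π²·ρ·r²))^{α/2}) ≤ τ` equals
`exp(−(ρ_c/ρ)·N·(α/(2π))·sin(2π/α)·(2^τ − 1)^{−2/α})`. -/
theorem stmt8 (α ρ ρc N : ℝ) (hα : 2 < α) (hρ : 0 < ρ) (hρc : 0 < ρc) (hN : 0 < N)
    (μ : Measure ℝ) [IsProbabilityMeasure μ]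
    (hμ : ∀ x : ℝ, 0 ≤ x → μ (Set.Ioi x) = ENNReal.ofReal (Real.exp (-(ρc * π * x ^ 2)))) :
    ∀ τ : ℝ, 0 < τ →
      μ {r : ℝ | 0 < r ∧
          Real.logb 2
              (1 + (N * α * Real.sin (2 * π / α) / (2 * π ^ 2 * ρ * r ^ 2)) ^ (α / 2)) ≤ τ}
        = ENNReal.ofReal
            (Real.exp (-(ρc / ρ * N * (α / (2 * π)) * Real.sin (2 * π / α) *
              ((2 : ℝ) ^ τ - 1) ^ (-(2 / α))))) := by
  intro τ hτ
  have hπ : 0 < π := Real.pi_pos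
  have hα0 : 0 < α := by linarith
  have hαne : α ≠ 0 := ne_of_gt hα0
  have he1 : α / 2 * (2 / α) = 1 := by field_simp
  have he2 : 2 / α * (α / 2) = 1 := by field_simp
  have hs : 0 < Real.sin (2 * π / α) := by
    apply Real.sin_pos_of_pos_of_lt_pi
    · positivity
    · rw [div_lt_iff₀ hα0]; nlinarith
  set s := Real.sin (2 * π / α) with hsdef
  have hT0 : 0 < (2:ℝ) ^ τ - 1 := by
    have : (1 : ℝ) < (2 : ℝ) ^ τ := Real.one_lt_rpow_iff_of_pos (by norm_num) |>.mpr
      (Or.inl ⟨by norm_num, hτ⟩)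
    linarith
  set T : ℝ := (2 : ℝ) ^ τ - 1 with hT
  have hu : (0:ℝ) < T ^ (2 / α) := Real.rpow_pos_of_pos hT0 _
  set c : ℝ := N * α * s / (2 * π ^ 2 * ρ) * T ^ (-(2 / α)) with hc
  have hc0 : 0 < c := by
    have : (0:ℝ) < T ^ (-(2/α)) := Real.rpow_pos_of_pos hT0 _
    positivity
  have hceq : c * (2 * π ^ 2 * ρ * T ^ (2 / α)) = N * α * s := by
    rw [hc, Real.rpow_neg hT0.le]
    field_simp
  set x₀ := Real.sqrt c with hx₀def
  have hx₀ : 0 < x₀ := Real.sqrt_pos.mpr hc0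
  have hx₀sq : x₀ ^ 2 = c := Real.sq_sqrt hc0.le
  have hset : {r : ℝ | 0 < r ∧
      Real.logb 2 (1 + (N * α * s / (2 * π ^ 2 * ρ * r ^ 2)) ^ (α / 2)) ≤ τ}
      = Set.Ici x₀ := by
    ext r
    simp only [Set.mem_setOf_eq, Set.mem_Ici]
    constructor
    · rintro ⟨hr, hlog⟩
      have hr2 : (0:ℝ) < 2 * π ^ 2 * ρ * r ^ 2 := by positivity
      have hbase : (0:ℝ) < N * α * s / (2 * π ^ 2 * ρ * r ^ 2) := by positivity
      have hy : (0:ℝ) < (N * α * s / (2 * π ^ 2 * ρ * r ^ 2)) ^ (α / 2) :=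
        Real.rpow_pos_of_pos hbase _
      rw [Real.logb_le_iff_le_rpow (by norm_num) (by linarith)] at hlog
      have hyT : (N * α * s / (2 * π ^ 2 * ρ * r ^ 2)) ^ (α / 2) ≤ T := by
        rw [hT]; linarith
      have h1 : N * α * s / (2 * π ^ 2 * ρ * r ^ 2) ≤ T ^ (2 / α) := by
        have h2 := Real.rpow_le_rpow (Real.rpow_nonneg hbase.le _) hyT
          (le_of_lt (by positivity : (0:ℝ) < 2/α))
        rwa [← Real.rpow_mul hbase.le, he1, Real.rpow_one] at h2
      rw [div_le_iff₀ hr2] at h1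
      have h3 : c ≤ r ^ 2 := by
        refine le_of_mul_le_mul_right ?_ (show (0:ℝ) < 2 * π ^ 2 * ρ * T ^ (2/α) by positivity)
        calc c * (2 * π ^ 2 * ρ * T ^ (2/α)) = N * α * s := hceq
          _ ≤ T ^ (2/α) * (2 * π ^ 2 * ρ * r ^ 2) := h1
          _ = r ^ 2 * (2 * π ^ 2 * ρ * T ^ (2/α)) := by ring
      calc x₀ = Real.sqrt c := rfl
        _ ≤ Real.sqrt (r ^ 2) := Real.sqrt_le_sqrt h3
        _ = r := Real.sqrt_sq hr.le
    · intro hle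
      have hr : 0 < r := lt_of_lt_of_le hx₀ hle
      refine ⟨hr, ?_⟩
      have hcr : c ≤ r ^ 2 := by
        rw [← hx₀sq]; exact pow_le_pow_left₀ hx₀.le hle 2
      have hr2 : (0:ℝ) < 2 * π ^ 2 * ρ * r ^ 2 := by positivity
      have hbase : (0:ℝ) < N * α * s / (2 * π ^ 2 * ρ * r ^ 2) := by positivity
      have h1 : N * α * s / (2 * π ^ 2 * ρ * r ^ 2) ≤ T ^ (2 / α) := by
        rw [div_le_iff₀ hr2]
        calc N * α * s = c * (2 * π ^ 2 * ρ * T ^ (2/α)) := hceq.symm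
          _ ≤ r ^ 2 * (2 * π ^ 2 * ρ * T ^ (2/α)) := by
              apply mul_le_mul_of_nonneg_right hcr (by positivity)
          _ = T ^ (2/α) * (2 * π ^ 2 * ρ * r ^ 2) := by ring
      have hyT : (N * α * s / (2 * π ^ 2 * ρ * r ^ 2)) ^ (α / 2) ≤ T := by
        have h2 := Real.rpow_le_rpow hbase.le h1 (le_of_lt (by positivity : (0:ℝ) < α/2))
        rwa [← Real.rpow_mul hT0.le, he2, Real.rpow_one] at h2
      rw [Real.logb_le_iff_le_rpow (by norm_num) (by positivity)]
      rw [hT] at hyT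
      linarith
  rw [hset]
  have hatom : μ {x₀} = 0 := atom_zero (ρc * π) μ hμ x₀ hx₀
  have hIci : μ (Set.Ici x₀) = μ (Set.Ioi x₀) := by
    apply le_antisymm
    · calc μ (Set.Ici x₀) = μ ({x₀} ∪ Set.Ioi x₀) := by
            rw [Set.singleton_union, Set.Ioi_insert]
      _ ≤ μ {x₀} + μ (Set.Ioi x₀) := measure_union_le _ _
      _ = μ (Set.Ioi x₀) := by rw [hatom, zero_add]
    · exact measure_mono Set.Ioi_subset_Ici_self
  rw [hIci, hμ x₀ hx₀.le, hx₀sq]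
  congr 2
  rw [hc]
  field_simp
end
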